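/- With t the infinite tribonacci word, A its sequence of positions of 1s, and k defined by k ∈ ℕ₀: A(k+1) − A(k) = 4 − t(k) for all k ≥ 0. -/

import Mathlib

/-- The tribonacci substitution on letters: 0 ↦ 01, 1 ↦ 02, 2 ↦ 0. -/
def sigmaW : ℕ → List ℕ
  | 0 => [0, 1]
  | 1 => [0, 2]
  | _ => [0]

/-- The substitution extended to words (concatenation homomorphism). -/
def sigmaL (w : List ℕ) : List ℕ := w.flatMap sigmaW

/-- The infinite tribonacci word t = 0,1,0,2,0,1,0,0,1,0,2,...,
the fixed point of the substitution starting from 0. -/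
def t (n : ℕ) : ℕ := (sigmaL^[n + 1] [0]).getD n 0

/-- A(n): position of the (n+1)-st occurrence of the letter 1 in t. -/
noncomputable def A (n : ℕ) : ℕ := Nat.nth (fun k => t k = 1) n

/-- B(n): position of the (n+1)-st occurrence of the letter 0 in t. -/
noncomputable def B (n : ℕ) : ℕ := Nat.nth (fun k => t k = 0) n

/-- C(n): position of the (n+1)-st occurrence of the letter 2 in t. -/
noncomputable def C (n : ℕ) : ℕ := Nat.nth (fun k => t k = 2) n

namespace TribAux

/-- finite approximants -/
def w (m : ℕ) : List ℕ := sigmaL^[m] [0]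

lemma w_zero : w 0 = [0] := rfl

lemma w_succ (m : ℕ) : w (m + 1) = sigmaL (w m) := Function.iterate_succ_apply' _ _ _

lemma sigmaL_append (l₁ l₂ : List ℕ) : sigmaL (l₁ ++ l₂) = sigmaL l₁ ++ sigmaL l₂ :=
  List.flatMap_append

lemma sigmaL_prefix {l₁ l₂ : List ℕ} (h : l₁ <+: l₂) : sigmaL l₁ <+: sigmaL l₂ := by
  obtain ⟨r, rfl⟩ := h
  exact ⟨sigmaL r, (sigmaL_append _ _).symm⟩

lemma w_prefix_succ (m : ℕ) : w m <+: w (m + 1) := by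
  induction m with
  | zero => exact ⟨[1], rfl⟩
  | succ n ih => rw [w_succ, w_succ]; exact sigmaL_prefix ih

lemma w_prefix {m m' : ℕ} (h : m ≤ m') : w m <+: w m' := by
  induction m' with
  | zero => rw [Nat.le_zero.mp h]
  | succ n ih =>
    rcases Nat.lt_or_ge m (n + 1) with h' | h'
    · exact (ih (Nat.lt_succ_iff.mp h')).trans (w_prefix_succ n)
    · rw [Nat.le_antisymm h h']

lemma sigmaW_length_pos (a : ℕ) : 1 ≤ (sigmaW a).length := by
  match a with
  | 0 => simp [sigmaW]
  | 1 => simp [sigmaW]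
  | (n+2) => simp [sigmaW]

lemma sigmaL_length_ge (l : List ℕ) : l.length ≤ (sigmaL l).length := by
  induction l with
  | nil => simp [sigmaL]
  | cons a l ih =>
    have : sigmaL (a :: l) = sigmaW a ++ sigmaL l := rfl
    rw [this, List.length_append, List.length_cons]
    have := sigmaW_length_pos a
    omega

lemma w_length (m : ℕ) : m + 1 ≤ (w m).length := by
  induction m with
  | zero => simp [w_zero]
  | succ n ih =>
    obtain ⟨r, hr⟩ := w_prefix (Nat.zero_le n)
    rw [w_zero] at hr
    have hlen : (sigmaL ([0] ++ r)).length = 2 + (sigmaL r).length := by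
      have : sigmaL ([0] ++ r) = [0, 1] ++ sigmaL r := rfl
      rw [this, List.length_append]; rfl
    rw [w_succ, ← hr, hlen]
    have h1 := sigmaL_length_ge r
    rw [← hr] at ih
    simp at ih
    omega

lemma prefix_getD {l l' : List ℕ} (h : l <+: l') {n : ℕ} (hn : n < l.length) :
    l'.getD n 0 = l.getD n 0 := by
  obtain ⟨r, rfl⟩ := h
  exact List.getD_append _ _ _ _ hn

lemma t_eq {m n : ℕ} (h : n < (w m).length) : t n = (w m).getD n 0 := by
  have ht : t n = (w (n + 1)).getD n 0 := rfl
  have hn : n < (w (n + 1)).length := by have := w_length (n + 1); omega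
  rcases Nat.le_total m (n + 1) with h' | h'
  · rw [ht, prefix_getD (w_prefix h') h]
  · rw [ht, ← prefix_getD (w_prefix h') hn]

lemma mem_sigmaW_le {a x : ℕ} (h : x ∈ sigmaW a) : x ≤ 2 := by
  match a with
  | 0 => simp [sigmaW] at h; omega
  | 1 => simp [sigmaW] at h; omega
  | (n+2) => simp [sigmaW] at h; omega

lemma mem_w_le {m x : ℕ} (h : x ∈ w m) : x ≤ 2 := by
  induction m with
  | zero => simp [w_zero] at h; omega
  | succ n ih =>
    rw [w_succ] at h
    obtain ⟨a, ha, hx⟩ := List.mem_flatMap.mp h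
    exact mem_sigmaW_le hx

lemma t_le_two (n : ℕ) : t n ≤ 2 := by
  have hn : n < (w (n + 1)).length := by have := w_length (n + 1); omega
  have : t n = (w (n + 1)).getD n 0 := rfl
  rw [this, List.getD_eq_getElem _ _ hn]
  exact mem_w_le (List.getElem_mem hn)

/-- block length -/
def ell (a : ℕ) : ℕ := (sigmaW a).length

lemma ell_pos (a : ℕ) : 1 ≤ ell a := sigmaW_length_pos a

lemma ell_le_two (a : ℕ) : ell a ≤ 2 := by
  match a with
  | 0 => simp [ell, sigmaW]
  | 1 => simp [ell, sigmaW]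
  | (n+2) => simp [ell, sigmaW]

/-- abelianized prefix length -/
def Dt (k : ℕ) : ℕ := ∑ i ∈ Finset.range k, ell (t i)

lemma Dt_zero : Dt 0 = 0 := rfl

lemma Dt_succ (k : ℕ) : Dt (k + 1) = Dt k + ell (t k) := Finset.sum_range_succ _ _

lemma Dt_ge (k : ℕ) : k ≤ Dt k := by
  induction k with
  | zero => simp [Dt_zero]
  | succ n ih => have := ell_pos (t n); rw [Dt_succ]; omega

lemma Dt_mono {k k' : ℕ} (h : k < k') : Dt k < Dt k' := by
  induction k' with
  | zero => omega
  | succ n ih =>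
    rw [Dt_succ]
    have := ell_pos (t n)
    rcases Nat.lt_or_ge k n with h' | h'
    · have := ih h'; omega
    · have : k = n := by omega
      subst this; omega

lemma sigmaL_take_length {m k : ℕ} (h : k ≤ (w m).length) :
    (sigmaL ((w m).take k)).length = Dt k := by
  induction k with
  | zero => simp [sigmaL, Dt_zero]
  | succ n ih =>
    have hn : n < (w m).length := by omega
    have hgt : t n = (w m)[n] := by
      rw [t_eq hn]; exact List.getD_eq_getElem _ _ hn
    have hget : (w m)[n]? = some (t n) := by
      rw [List.getElem?_eq_getElem hn, ← hgt]
    have htake : (w m).take (n + 1) = (w m).take n ++ [t n] := by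
      rw [List.take_succ, hget]; rfl
    rw [htake, sigmaL_append, List.length_append, ih (by omega), Dt_succ]
    simp [sigmaL, ell]

/-- The fundamental block decomposition lemma. -/
lemma t_block (k j : ℕ) (hj : j < ell (t k)) : t (Dt k + j) = (sigmaW (t k)).getD j 0 := by
  set m := Dt (k + 1) with hm
  have hk : k < (w m).length := by
    have h1 := Dt_ge k
    have h2 : Dt k < Dt (k + 1) := Dt_mono (Nat.lt_succ_self k)
    have h3 := w_length m
    omega
  have hk1 : k + 1 ≤ (w m).length := hk
  have htake : (w m).take (k + 1) = (w m).take k ++ [t k] := by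
    have hgt : t k = (w m)[k] := by
      rw [t_eq hk]; exact List.getD_eq_getElem _ _ hk
    have hget : (w m)[k]? = some (t k) := by
      rw [List.getElem?_eq_getElem hk, ← hgt]
    rw [List.take_succ, hget]; rfl
  have hpre : sigmaL ((w m).take (k + 1)) <+: w (m + 1) := by
    rw [w_succ]
    exact sigmaL_prefix (List.take_prefix _ _)
  have hlen : (sigmaL ((w m).take (k + 1))).length = Dt (k + 1) := sigmaL_take_length hk1
  have hidx : Dt k + j < Dt (k + 1) := by rw [Dt_succ]; omega
  have hidx' : Dt k + j < (sigmaL ((w m).take (k + 1))).length := by omega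
  have hwlen : Dt k + j < (w (m + 1)).length := by
    have h1 := hpre.length_le
    omega
  rw [t_eq hwlen, prefix_getD hpre hidx']
  rw [htake, sigmaL_append]
  have hl : (sigmaL ((w m).take k)).length = Dt k := sigmaL_take_length (by omega)
  rw [List.getD_append_right _ _ _ _ (by omega), hl]
  have : sigmaL [t k] = sigmaW (t k) ++ [] := by simp [sigmaL]
  rw [this, List.getD_append _ _ _ _ (by simpa [ell] using hj)]
  congr 1
  omega

lemma sigmaW_getD_zero (a : ℕ) : (sigmaW a).getD 0 0 = 0 := by
  match a with
  | 0 => rfl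
  | 1 => rfl
  | (n+2) => rfl

lemma t_Dt (k : ℕ) : t (Dt k) = 0 := by
  have := t_block k 0 (ell_pos _)
  rw [sigmaW_getD_zero] at this
  simpa using this

lemma t_Dt_add_one_of_zero {k : ℕ} (h : t k = 0) : t (Dt k + 1) = 1 := by
  have := t_block k 1 (by rw [h]; simp [ell, sigmaW])
  rwa [h] at this

lemma t_Dt_add_one_of_one {k : ℕ} (h : t k = 1) : t (Dt k + 1) = 2 := by
  have := t_block k 1 (by rw [h]; simp [ell, sigmaW])
  rwa [h] at this

lemma ell_t_vals (k : ℕ) : (t k = 0 ∧ ell (t k) = 2) ∨ (t k = 1 ∧ ell (t k) = 2) ∨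
    (t k = 2 ∧ ell (t k) = 1) := by
  have := t_le_two k
  interval_cases h : t k
  · left; exact ⟨rfl, rfl⟩
  · right; left; exact ⟨rfl, rfl⟩
  · right; right; exact ⟨rfl, rfl⟩

open Nat in
lemma count_zero_Dt (m : ℕ) : count (fun n => t n = 0) (Dt m) = m := by
  induction m with
  | zero => simp [Dt_zero]
  | succ n ih =>
    rw [Dt_succ]
    rcases ell_t_vals n with ⟨h0, he⟩ | ⟨h0, he⟩ | ⟨h0, he⟩ <;> rw [he]
    · have : Dt n + 2 = (Dt n + 1) + 1 := rfl
      rw [this, count_succ, count_succ, ih, t_Dt n]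
      rw [t_Dt_add_one_of_zero h0]
      simp
    · have : Dt n + 2 = (Dt n + 1) + 1 := rfl
      rw [this, count_succ, count_succ, ih, t_Dt n]
      rw [t_Dt_add_one_of_one h0]
      simp
    · rw [count_succ, ih, t_Dt n]
      simp

open Nat in
lemma count_one_Dt (m : ℕ) :
    count (fun n => t n = 1) (Dt m) = count (fun n => t n = 0) m := by
  induction m with
  | zero => simp [Dt_zero]
  | succ n ih =>
    rw [Dt_succ, count_succ (p := fun n => t n = 0)]
    rcases ell_t_vals n with ⟨h0, he⟩ | ⟨h0, he⟩ | ⟨h0, he⟩ <;> rw [he]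
    · have : Dt n + 2 = (Dt n + 1) + 1 := rfl
      rw [this, count_succ, count_succ, ih, t_Dt n]
      rw [t_Dt_add_one_of_zero h0, h0]
      simp
    · have : Dt n + 2 = (Dt n + 1) + 1 := rfl
      rw [this, count_succ, count_succ, ih, t_Dt n]
      rw [t_Dt_add_one_of_one h0, h0]
      simp
    · rw [count_succ, ih, t_Dt n, h0]
      simp

lemma A_eq (k : ℕ) : A k = Dt (Dt k) + 1 := by
  have h1 : t (Dt (Dt k) + 1) = 1 := t_Dt_add_one_of_zero (t_Dt k)
  have hc : Nat.count (fun n => t n = 1) (Dt (Dt k) + 1) = k := by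
    rw [Nat.count_succ]
    have h0 : t (Dt (Dt k)) = 0 := t_Dt (Dt k)
    rw [count_one_Dt, count_zero_Dt]
    simp [h0]
  have := Nat.nth_count (p := fun n => t n = 1) h1
  rw [hc] at this
  exact this

end TribAux

/-- A(k+1) − A(k) = 4 − t(k) for all k ≥ 0. -/
theorem A_diff (k : ℕ) : (A (k + 1) : ℤ) - A k = 4 - t k := by
  open TribAux in
  rw [A_eq, A_eq, Dt_succ]
  rcases ell_t_vals k with ⟨h0, he⟩ | ⟨h0, he⟩ | ⟨h0, he⟩ <;> rw [he, h0]
  · have e1 : Dt (Dt k + 2) = Dt (Dt k + 1) + ell (t (Dt k + 1)) := Dt_succ _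
    have e2 : Dt (Dt k + 1) = Dt (Dt k) + ell (t (Dt k)) := Dt_succ _
    rw [t_Dt k] at e2
    rw [t_Dt_add_one_of_zero h0] at e1
    have : ell 0 = 2 := rfl
    have h1 : ell 1 = 2 := rfl
    rw [this] at e2; rw [h1] at e1
    push_cast
    omega
  · have e1 : Dt (Dt k + 2) = Dt (Dt k + 1) + ell (t (Dt k + 1)) := Dt_succ _
    have e2 : Dt (Dt k + 1) = Dt (Dt k) + ell (t (Dt k)) := Dt_succ _
    rw [t_Dt k] at e2
    rw [t_Dt_add_one_of_one h0] at e1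
    have : ell 0 = 2 := rfl
    have h2 : ell 2 = 1 := rfl
    rw [this] at e2; rw [h2] at e1
    push_cast
    omega
  · have e2 : Dt (Dt k + 1) = Dt (Dt k) + ell (t (Dt k)) := Dt_succ _
    rw [t_Dt k] at e2
    have : ell 0 = 2 := rfl
    rw [this] at e2
    push_cast
    omega
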